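/- Let ρ ∈ (-1/3, 0), u = ρ + √(ρ² - ρ), v = ρ - √(ρ² - ρ). Then for every natural number n, |(u^{n+1} - v^{n+1})/(u - v)| ≤ |v|ⁿ. -/

import Mathlib

theorem stmt_2 (ρ : ℝ) (hρ : ρ ∈ Set.Ioo (-(1/3) : ℝ) 0)
    (u v : ℝ)
    (hu : u = ρ + Real.sqrt (ρ ^ 2 - ρ))
    (hv : v = ρ - Real.sqrt (ρ ^ 2 - ρ)) :
    ∀ n : ℕ, |(u ^ (n + 1) - v ^ (n + 1)) / (u - v)| ≤ |v| ^ n := by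
  obtain ⟨h1, h2⟩ := hρ
  set s := Real.sqrt (ρ ^ 2 - ρ) with hsdef
  have hnn : (0:ℝ) ≤ ρ ^ 2 - ρ := by nlinarith
  have hs2 : s ^ 2 = ρ ^ 2 - ρ := Real.sq_sqrt hnn
  have hs0 : 0 ≤ s := Real.sqrt_nonneg _
  have hsρ : -ρ ≤ s := by nlinarith
  have hspos : 0 < s := by nlinarith
  have hvneg : v < 0 := by rw [hv]; nlinarith
  have hvabs : |v| = s - ρ := by rw [abs_of_neg hvneg, hv]; ring
  have huvne : u - v ≠ 0 := by rw [hu, hv]; intro h; nlinarith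
  have hsum : u + v = 2 * ρ := by rw [hu, hv]; ring
  have hprod : u * v = ρ := by rw [hu, hv]; nlinarith
  have key : ∀ n : ℕ,
      |(u ^ (n + 1) - v ^ (n + 1)) / (u - v)| ≤ |v| ^ n ∧
      |(u ^ (n + 2) - v ^ (n + 2)) / (u - v)| ≤ |v| ^ (n + 1) := by
    intro n
    induction n with
    | zero =>
      constructor
      · have e : (u ^ (0 + 1) - v ^ (0 + 1)) / (u - v) = 1 := by
          simp only [zero_add, pow_one]
          exact div_self huvne
        rw [e]
        norm_num
      · have e : (u ^ (0 + 2) - v ^ (0 + 2)) / (u - v) = u + v := by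
          field_simp
          ring
        rw [e, hsum, hvabs]
        rw [abs_of_nonpos (by linarith)]
        have e1 : (s - ρ) ^ (0 + 1) = s - ρ := by norm_num
        rw [e1]
        linarith
    | succ n ih =>
      obtain ⟨ih0, ih1⟩ := ih
      refine ⟨ih1, ?_⟩
      have hrec : (u ^ (n + 3) - v ^ (n + 3)) / (u - v) =
          (u + v) * ((u ^ (n + 2) - v ^ (n + 2)) / (u - v)) -
          (u * v) * ((u ^ (n + 1) - v ^ (n + 1)) / (u - v)) := by
        rw [← mul_div_assoc, ← mul_div_assoc, ← sub_div]
        congr 1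
        ring
      have e3 : n + 1 + 2 = n + 3 := by ring
      rw [e3, hrec, hsum, hprod]
      set b1 := (u ^ (n + 2) - v ^ (n + 2)) / (u - v) with hb1
      set b0 := (u ^ (n + 1) - v ^ (n + 1)) / (u - v) with hb0
      have habs : |2 * ρ * b1 - ρ * b0| ≤ 2 * (-ρ) * |b1| + (-ρ) * |b0| := by
        calc |2 * ρ * b1 - ρ * b0| ≤ |2 * ρ * b1| + |ρ * b0| := abs_sub _ _
          _ = 2 * (-ρ) * |b1| + (-ρ) * |b0| := by
              simp only [abs_mul, abs_two, abs_of_neg h2]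
      have hstep : 2 * (-ρ) * |b1| + (-ρ) * |b0| ≤
          2 * (-ρ) * |v| ^ (n + 1) + (-ρ) * |v| ^ n := by
        have hρp : (0:ℝ) < -ρ := by linarith
        nlinarith [ih0, ih1]
      have hident : 2 * (-ρ) * |v| ^ (n + 1) + (-ρ) * |v| ^ n = |v| ^ (n + 1 + 1) := by
        rw [hvabs]
        have hw : (s - ρ) ^ 2 = 2 * (-ρ) * (s - ρ) + (-ρ) := by nlinarith
        have : (s - ρ) ^ (n + 1 + 1) = (s - ρ) ^ n * (s - ρ) ^ 2 := by ring
        rw [this, hw]; ring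
      calc |2 * ρ * b1 - ρ * b0| ≤ 2 * (-ρ) * |b1| + (-ρ) * |b0| := habs
        _ ≤ 2 * (-ρ) * |v| ^ (n + 1) + (-ρ) * |v| ^ n := hstep
        _ = |v| ^ (n + 1 + 1) := hident
  intro n
  exact (key n).1
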